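/- If f is an entire function such that Re(f(z)) ≤ a|z|² + b for all complex z (with a, b real constants), then f is a polynomial of degree at most 2. -/

import Mathlib

open Complex Real MeasureTheory intervalIntegral Filter Polynomial Metric

lemma aux_coeff_bound (f : ℂ → ℂ) (hf : Differentiable ℂ f) (a b : ℝ)
    (hle : ∀ z : ℂ, (f z).re ≤ a * ‖z‖ ^ 2 + b)
    (m : ℕ) (R : ℝ) (hR0 : 0 < R) :
    ‖iteratedDeriv (m + 1) f 0‖ ≤
      (Nat.factorial (m+1) : ℝ) * (2 * (a * R ^ 2 + b - (f 0).re)) * (R⁻¹) ^ (m + 1) := by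
  set A : ℝ := a * R ^ 2 + b with hA
  set g : ℂ → ℂ := fun z => f z - (A : ℂ) with hgdef
  have hg : Differentiable ℂ g := hf.sub_const _
  -- basic facts about the circle
  have habs : ∀ θ : ℝ, ‖circleMap 0 R θ‖ = R := by
    intro θ; rw [norm_circleMap_zero, abs_of_pos hR0]
  have hne : ∀ θ : ℝ, circleMap 0 R θ ≠ 0 := fun θ => circleMap_ne_center hR0.ne'
  -- Re g ≤ 0 on the circle
  have hreg : ∀ θ : ℝ, (g (circleMap 0 R θ)).re = (f (circleMap 0 R θ)).re - A := by
    intro θ; simp [hgdef]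
  have hregle : ∀ θ : ℝ, (f (circleMap 0 R θ)).re ≤ A := by
    intro θ; have := hle (circleMap 0 R θ); rwa [habs θ] at this
  -- power series coefficient = iterated derivative
  have hps : HasFPowerSeriesOnBall g (cauchyPowerSeries g 0 R) 0 R.toNNReal := by
    have h := hg.differentiableOn.hasFPowerSeriesOnBall (R := R.toNNReal) (c := 0)
      (by simpa using hR0)
    rwa [Real.coe_toNNReal R hR0.le] at h
  have hkey : (Nat.factorial (m+1)) • cauchyPowerSeries g 0 R (m+1) (fun _ => (1:ℂ))
      = iteratedDeriv (m+1) g 0 := by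
    rw [iteratedDeriv_eq_iteratedFDeriv]
    exact hps.factorial_smul 1 (m+1)
  have hdg : deriv g = deriv f := funext fun x => deriv_sub_const _
  have hIter : iteratedDeriv (m+1) g 0 = iteratedDeriv (m+1) f 0 := by
    rw [iteratedDeriv_succ', iteratedDeriv_succ', hdg]
  have hcontz : Continuous fun θ : ℝ => g (circleMap 0 R θ) :=
    hg.continuous.comp (continuous_circleMap 0 R)
  have hconte : Continuous fun θ : ℝ => ((circleMap 0 R θ)⁻¹) ^ (m + 1) :=
    ((continuous_circleMap 0 R).inv₀ hne).pow _
  set J : ℂ := ∫ θ in (0:ℝ)..2 * π,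
      ((circleMap 0 R θ)⁻¹) ^ (m + 1) * g (circleMap 0 R θ) with hJ
  have happ : cauchyPowerSeries g 0 R (m + 1) (fun _ => 1)
      = (2 * π * Complex.I : ℂ)⁻¹ • (Complex.I * J) := by
    rw [cauchyPowerSeries_apply]
    congr 1
    rw [circleIntegral]
    have : ∀ θ : ℝ, deriv (circleMap 0 R) θ •
        ((1 / (circleMap 0 R θ - 0)) ^ (m + 1) • (circleMap 0 R θ - 0)⁻¹ •
          g (circleMap 0 R θ))
        = Complex.I * (((circleMap 0 R θ)⁻¹) ^ (m + 1) * g (circleMap 0 R θ)) := by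
      intro θ
      rw [deriv_circleMap]
      have h0 := hne θ
      simp only [smul_eq_mul, sub_zero, one_div]
      field_simp
    rw [intervalIntegral.integral_congr (fun θ _ => this θ),
      intervalIntegral.integral_const_mul]
  -- circle integral of w^m * g w vanishes (Cauchy's theorem)
  have hzero : (∮ w in C(0, R), w ^ m * g w) = 0 :=
    circleIntegral_eq_zero_of_differentiable_on_off_countable hR0.le Set.countable_empty
      (Continuous.continuousOn ((continuous_pow m).mul hg.continuous))
      (fun w _ => ((differentiable_pow m).mul hg).differentiableAt)
  have hK : (∫ θ in (0:ℝ)..2 * π, (circleMap 0 R θ) ^ (m + 1) * g (circleMap 0 R θ)) = 0 := by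
    have h1 : (∮ w in C(0, R), w ^ m * g w)
        = Complex.I * ∫ θ in (0:ℝ)..2 * π,
            (circleMap 0 R θ) ^ (m + 1) * g (circleMap 0 R θ) := by
      rw [circleIntegral]
      have hpt : ∀ θ : ℝ, deriv (circleMap 0 R) θ •
          ((circleMap 0 R θ) ^ m * g (circleMap 0 R θ))
          = Complex.I * ((circleMap 0 R θ) ^ (m + 1) * g (circleMap 0 R θ)) := by
        intro θ; rw [deriv_circleMap]; simp only [smul_eq_mul]; ring
      rw [intervalIntegral.integral_congr (fun θ _ => hpt θ),
        intervalIntegral.integral_const_mul]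
    rw [h1] at hzero
    exact (mul_eq_zero.1 hzero).resolve_left Complex.I_ne_zero
  -- conjugate of the circle map
  have hconje : ∀ θ : ℝ, (starRingEnd ℂ) (((circleMap 0 R θ)⁻¹) ^ (m + 1))
      = (((R:ℂ) ^ 2) ^ (m + 1))⁻¹ * (circleMap 0 R θ) ^ (m + 1) := by
    intro θ
    have h0 := hne θ
    have h1 : circleMap 0 R θ * (starRingEnd ℂ) (circleMap 0 R θ) = ((R:ℂ)) ^ 2 := by
      rw [Complex.mul_conj, Complex.normSq_eq_norm_sq, habs θ]; push_cast; ring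
    have hR2 : ((R:ℂ)) ^ 2 ≠ 0 := pow_ne_zero _ (by exact_mod_cast hR0.ne')
    have hcw : (starRingEnd ℂ) ((circleMap 0 R θ)⁻¹) = ((R:ℂ) ^ 2)⁻¹ * circleMap 0 R θ := by
      have hc : (starRingEnd ℂ) (circleMap 0 R θ) = (R:ℂ) ^ 2 * (circleMap 0 R θ)⁻¹ := by
        field_simp
        linear_combination h1
      rw [map_inv₀, hc, mul_inv, inv_inv]
    rw [map_pow, hcw, mul_pow, inv_pow]
  -- the conjugate part integrates to zero
  have hconjint : (∫ θ in (0:ℝ)..2 * π,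
      ((circleMap 0 R θ)⁻¹) ^ (m + 1) * (starRingEnd ℂ) (g (circleMap 0 R θ))) = 0 := by
    have hi : IntervalIntegrable (fun θ : ℝ =>
        ((circleMap 0 R θ)⁻¹) ^ (m + 1) * (starRingEnd ℂ) (g (circleMap 0 R θ)))
        MeasureTheory.volume 0 (2 * π) :=
      (hconte.mul (continuous_star.comp hcontz)).intervalIntegrable _ _
    have hcc := (Complex.conjCLE.toContinuousLinearMap : ℂ →L[ℝ] ℂ).intervalIntegral_comp_comm hi
    have hL : ∀ θ : ℝ, (Complex.conjCLE.toContinuousLinearMap : ℂ →L[ℝ] ℂ)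
        (((circleMap 0 R θ)⁻¹) ^ (m + 1) * (starRingEnd ℂ) (g (circleMap 0 R θ)))
        = (((R:ℂ) ^ 2) ^ (m + 1))⁻¹ *
            ((circleMap 0 R θ) ^ (m + 1) * g (circleMap 0 R θ)) := by
      intro θ
      have : (Complex.conjCLE.toContinuousLinearMap : ℂ →L[ℝ] ℂ)
          (((circleMap 0 R θ)⁻¹) ^ (m + 1) * (starRingEnd ℂ) (g (circleMap 0 R θ)))
          = (starRingEnd ℂ) (((circleMap 0 R θ)⁻¹) ^ (m + 1) *
              (starRingEnd ℂ) (g (circleMap 0 R θ))) := rfl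
      rw [this, map_mul, Complex.conj_conj, hconje θ, mul_assoc]
    rw [intervalIntegral.integral_congr (fun θ _ => hL θ),
      intervalIntegral.integral_const_mul, hK, mul_zero] at hcc
    have : (starRingEnd ℂ) (∫ θ in (0:ℝ)..2 * π,
        ((circleMap 0 R θ)⁻¹) ^ (m + 1) * (starRingEnd ℂ) (g (circleMap 0 R θ))) = 0 := hcc.symm
    exact star_eq_zero.mp this
  -- J equals the integral against twice the real part
  have hJ2 : J = ∫ θ in (0:ℝ)..2 * π,
      ((circleMap 0 R θ)⁻¹) ^ (m + 1) * (2 * ((g (circleMap 0 R θ)).re : ℂ)) := by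
    have h1 : ∀ θ : ℝ, ((circleMap 0 R θ)⁻¹) ^ (m + 1) * g (circleMap 0 R θ)
        = ((circleMap 0 R θ)⁻¹) ^ (m + 1) * (2 * ((g (circleMap 0 R θ)).re : ℂ))
          - ((circleMap 0 R θ)⁻¹) ^ (m + 1) * (starRingEnd ℂ) (g (circleMap 0 R θ)) := by
      intro θ
      have h := Complex.add_conj (g (circleMap 0 R θ))
      push_cast at h
      linear_combination ((circleMap 0 R θ)⁻¹) ^ (m + 1) * h
    have hint1 : IntervalIntegrable (fun θ : ℝ =>
        ((circleMap 0 R θ)⁻¹) ^ (m + 1) * (2 * ((g (circleMap 0 R θ)).re : ℂ)))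
        MeasureTheory.volume 0 (2 * π) :=
      (hconte.mul (continuous_const.mul
        (Complex.continuous_ofReal.comp (Complex.continuous_re.comp hcontz)))).intervalIntegrable _ _
    have hint2 : IntervalIntegrable (fun θ : ℝ =>
        ((circleMap 0 R θ)⁻¹) ^ (m + 1) * (starRingEnd ℂ) (g (circleMap 0 R θ)))
        MeasureTheory.volume 0 (2 * π) :=
      (hconte.mul (continuous_star.comp hcontz)).intervalIntegrable _ _
    rw [hJ, intervalIntegral.integral_congr (fun θ _ => h1 θ),
      intervalIntegral.integral_sub hint1 hint2, hconjint, sub_zero]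
  -- mean value property
  have hmean : (∫ θ in (0:ℝ)..2 * π, f (circleMap 0 R θ)) = ((2 * π : ℝ) : ℂ) * f 0 := by
    have hmean' : (∮ w in C(0, R), (w - 0)⁻¹ • f w) = (2 * ↑π * Complex.I : ℂ) • f 0 :=
      (hf.differentiableOn).circleIntegral_sub_inv_smul (Metric.mem_ball_self hR0)
    rw [circleIntegral] at hmean'
    have hpt : ∀ θ : ℝ, deriv (circleMap 0 R) θ •
        ((circleMap 0 R θ - 0)⁻¹ • f (circleMap 0 R θ))
        = Complex.I * f (circleMap 0 R θ) := by
      intro θ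
      rw [deriv_circleMap]
      have h0 := hne θ
      simp only [smul_eq_mul, sub_zero]
      field_simp
    rw [intervalIntegral.integral_congr (fun θ _ => hpt θ),
      intervalIntegral.integral_const_mul] at hmean'
    have : Complex.I * (∫ θ in (0:ℝ)..2 * π, f (circleMap 0 R θ))
        = Complex.I * (((2 * π : ℝ) : ℂ) * f 0) := by
      rw [hmean', smul_eq_mul]; push_cast; ring
    exact mul_left_cancel₀ Complex.I_ne_zero this
  have hfre : (∫ θ in (0:ℝ)..2 * π, (f (circleMap 0 R θ)).re) = 2 * π * (f 0).re := by
    have hi : IntervalIntegrable (fun θ : ℝ => f (circleMap 0 R θ))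
        MeasureTheory.volume 0 (2 * π) :=
      (hf.continuous.comp (continuous_circleMap 0 R)).intervalIntegrable _ _
    have hcc := (Complex.reCLM : ℂ →L[ℝ] ℝ).intervalIntegral_comp_comm hi
    rw [hmean] at hcc
    simpa using hcc
  have hintRe : (∫ θ in (0:ℝ)..2 * π, (A - (f (circleMap 0 R θ)).re))
      = 2 * π * A - 2 * π * (f 0).re := by
    have hire : IntervalIntegrable (fun θ : ℝ => (f (circleMap 0 R θ)).re)
        MeasureTheory.volume 0 (2 * π) :=
      (Complex.continuous_re.comp (hf.continuous.comp (continuous_circleMap 0 R))).intervalIntegrable _ _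
    rw [intervalIntegral.integral_sub intervalIntegrable_const hire, hfre,
      intervalIntegral.integral_const]
    simp only [smul_eq_mul]
    ring
  -- norm bound on J
  have hnormJ : ‖J‖ ≤ (R⁻¹) ^ (m + 1) * (2 * (2 * π * A - 2 * π * (f 0).re)) := by
    rw [hJ2]
    refine (intervalIntegral.norm_integral_le_integral_norm Real.two_pi_pos.le).trans ?_
    have heq : ∀ θ : ℝ, ‖((circleMap 0 R θ)⁻¹) ^ (m + 1) * (2 * ((g (circleMap 0 R θ)).re : ℂ))‖
        = (R⁻¹) ^ (m + 1) * (2 * (A - (f (circleMap 0 R θ)).re)) := by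
      intro θ
      rw [norm_mul, norm_pow, norm_inv, norm_mul]
      have habs2 : |(g (circleMap 0 R θ)).re| = A - (f (circleMap 0 R θ)).re := by
        rw [abs_of_nonpos (by rw [hreg]; linarith [hregle θ]), hreg]; ring
      rw [habs θ]
      simp [Complex.norm_real, habs2]
    rw [intervalIntegral.integral_congr (fun θ _ => heq θ)]
    have : (∫ θ in (0:ℝ)..2 * π, (R⁻¹) ^ (m + 1) * (2 * (A - (f (circleMap 0 R θ)).re)))
        = (R⁻¹) ^ (m + 1) * (2 * (2 * π * A - 2 * π * (f 0).re)) := by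
      rw [intervalIntegral.integral_const_mul, intervalIntegral.integral_const_mul, hintRe]
    rw [this]
  -- assemble
  have hfinal : iteratedDeriv (m + 1) f 0
      = (Nat.factorial (m + 1) : ℂ) * ((2 * ↑π * Complex.I : ℂ)⁻¹ * (Complex.I * J)) := by
    rw [← hIter, ← hkey, happ]
    simp [nsmul_eq_mul, smul_eq_mul]
  rw [hfinal]
  have hnorm1 : ‖(Nat.factorial (m + 1) : ℂ) * ((2 * ↑π * Complex.I : ℂ)⁻¹ * (Complex.I * J))‖
      = (Nat.factorial (m + 1) : ℝ) * ((2 * π)⁻¹ * ‖J‖) := by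
    rw [norm_mul, norm_mul, norm_mul, norm_inv, norm_mul, norm_mul]
    simp [_root_.abs_of_nonneg Real.pi_nonneg]
  rw [hnorm1]
  have hstep : (Nat.factorial (m + 1) : ℝ) * ((2 * π)⁻¹ * ‖J‖)
      ≤ (Nat.factorial (m + 1) : ℝ) *
        ((2 * π)⁻¹ * ((R⁻¹) ^ (m + 1) * (2 * (2 * π * A - 2 * π * (f 0).re)))) := by
    have h1 : (0:ℝ) ≤ (2 * π)⁻¹ := by positivity
    have h2 : (0:ℝ) ≤ (Nat.factorial (m + 1) : ℝ) := by positivity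
    exact mul_le_mul_of_nonneg_left (mul_le_mul_of_nonneg_left hnormJ h1) h2
  refine hstep.trans (le_of_eq ?_)
  rw [hA]
  field_simp

lemma aux_vanish (f : ℂ → ℂ) (hf : Differentiable ℂ f) (a b : ℝ)
    (hle : ∀ z : ℂ, (f z).re ≤ a * ‖z‖ ^ 2 + b)
    (n : ℕ) (hn : 3 ≤ n) : iteratedDeriv n f 0 = 0 := by
  obtain ⟨m, rfl⟩ : ∃ m, n = m + 1 := ⟨n - 1, by omega⟩
  set C : ℝ := (Nat.factorial (m + 1) : ℝ) * (2 * (|a| + |b| + |(f 0).re|)) with hC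
  have hbound : ∀ R : ℝ, 1 ≤ R → ‖iteratedDeriv (m + 1) f 0‖ ≤ C / R := by
    intro R hR
    have hR0 : 0 < R := lt_of_lt_of_le one_pos hR
    refine (aux_coeff_bound f hf a b hle m R hR0).trans ?_
    have h1 : a * R ^ 2 + b - (f 0).re ≤ (|a| + |b| + |(f 0).re|) * R ^ 2 := by
      have hR2 : (1:ℝ) ≤ R ^ 2 := by nlinarith
      nlinarith [le_abs_self a, le_abs_self b, neg_abs_le ((f 0).re), sq_nonneg R,
        abs_nonneg b, abs_nonneg ((f 0).re)]
    have h2 : R ^ 2 * (R⁻¹) ^ (m + 1) ≤ R⁻¹ := by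
      have hm : R ^ 2 ≤ R ^ m := pow_le_pow_right₀ hR (by omega)
      have he : R ^ 2 * (R⁻¹) ^ (m + 1) = R ^ 2 / R ^ m * R⁻¹ := by
        rw [inv_pow]; field_simp; ring
      rw [he]
      have hdiv : R ^ 2 / R ^ m ≤ 1 := (div_le_one (pow_pos hR0 m)).mpr hm
      calc R ^ 2 / R ^ m * R⁻¹ ≤ 1 * R⁻¹ :=
            mul_le_mul_of_nonneg_right hdiv (inv_nonneg.mpr hR0.le)
        _ = R⁻¹ := one_mul _
    have hfact : (0:ℝ) ≤ (Nat.factorial (m + 1) : ℝ) := by positivity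
    have hpow : (0:ℝ) ≤ (R⁻¹) ^ (m + 1) := by positivity
    calc (Nat.factorial (m + 1) : ℝ) * (2 * (a * R ^ 2 + b - (f 0).re)) * (R⁻¹) ^ (m + 1)
        ≤ (Nat.factorial (m + 1) : ℝ) * (2 * ((|a| + |b| + |(f 0).re|) * R ^ 2)) * (R⁻¹) ^ (m + 1) := by
          apply mul_le_mul_of_nonneg_right _ hpow
          apply mul_le_mul_of_nonneg_left _ hfact
          linarith
      _ = C * (R ^ 2 * (R⁻¹) ^ (m + 1)) := by rw [hC]; ring
      _ ≤ C * R⁻¹ := by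
          apply mul_le_mul_of_nonneg_left h2
          positivity
      _ = C / R := by rw [div_eq_mul_inv]
  have htend : Filter.Tendsto (fun R : ℝ => C / R) Filter.atTop (nhds 0) :=
    Filter.Tendsto.div_atTop tendsto_const_nhds Filter.tendsto_id
  have hle0 : ‖iteratedDeriv (m + 1) f 0‖ ≤ 0 :=
    ge_of_tendsto htend (Filter.eventually_atTop.2 ⟨1, fun R hR => hbound R hR⟩)
  exact norm_le_zero_iff.mp hle0

theorem entire_re_quadratic_bound_is_poly_deg_two
    (f : ℂ → ℂ) (hf : Differentiable ℂ f) (a b : ℝ)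
    (hle : ∀ z : ℂ, (f z).re ≤ a * ‖z‖ ^ 2 + b) :
    ∃ Q : Polynomial ℂ, Q.degree ≤ 2 ∧ ∀ z : ℂ, f z = Q.eval z := by
  refine ⟨Polynomial.C (f 0) + Polynomial.C (deriv f 0) * Polynomial.X
    + Polynomial.C ((2:ℂ)⁻¹ * iteratedDeriv 2 f 0) * Polynomial.X ^ 2, ?_, ?_⟩
  · compute_degree
  · intro z
    have hts := Complex.taylorSeries_eq_of_entire' 0 z hf
    rw [← hts]
    have hvanish : ∀ k, k ∉ Finset.range 3 →
        ((Nat.factorial k : ℂ))⁻¹ * iteratedDeriv k f 0 * (z - 0) ^ k = 0 := by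
      intro k hk
      rw [aux_vanish f hf a b hle k (by simp [Finset.mem_range] at hk; omega)]
      ring
    rw [tsum_eq_sum hvanish]
    simp [Finset.sum_range_succ, iteratedDeriv_zero, iteratedDeriv_one, Nat.factorial]
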